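/- Let M and l be natural numbers. If l ≤ M, then ∫_{−1}^{1} ((1−x)/2)^M · P_l(x) dx = 2·(−1)^l·(M!)²/((M−l)!·(M+l+1)!). If l > M, then ∫_{−1}^{1} ((1−x)/2)^M · P_l(x) dx = 0. -/

import Mathlib

open Polynomial MeasureTheory intervalIntegral Set

lemma iteratedDeriv_polyeval (n : ℕ) (p : ℝ[X]) :
    iteratedDeriv n (fun x => p.eval x) = fun x => (derivative^[n] p).eval x := by
  induction n generalizing p with
  | zero => simp
  | succ n ih =>
    rw [iteratedDeriv_succ', Function.iterate_succ_apply]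
    have : deriv (fun x => p.eval x) = fun x => (derivative p).eval x :=
      funext fun x => p.deriv
    rw [this, ih]

lemma poly_ibp (p q : ℝ[X]) (a b : ℝ) :
    ∫ x in a..b, q.eval x * (derivative p).eval x
      = q.eval b * p.eval b - q.eval a * p.eval a
        - ∫ x in a..b, (derivative q).eval x * p.eval x :=
  integral_mul_deriv_eq_deriv_mul (fun x _ => q.hasDerivAt x) (fun x _ => p.hasDerivAt x)
    ((q.derivative.continuous).intervalIntegrable _ _)
    ((p.derivative.continuous).intervalIntegrable _ _)

lemma iterate_derivative_factor (l k : ℕ) (hk : k ≤ l) :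
    ∃ r : ℝ[X], derivative^[k] ((X ^ 2 - 1) ^ l) = (X ^ 2 - 1) ^ (l - k) * r := by
  induction k with
  | zero => exact ⟨1, by simp⟩
  | succ k ih =>
    obtain ⟨r, hr⟩ := ih (Nat.le_of_succ_le hk)
    obtain ⟨m, hm⟩ : ∃ m, l - k = m + 1 :=
      ⟨l - (k + 1), by omega⟩
    refine ⟨C ((m : ℝ) + 1) * derivative (X ^ 2 - 1) * r + (X ^ 2 - 1) * derivative r, ?_⟩
    have hm' : l - (k + 1) = m := by omega
    rw [Function.iterate_succ_apply', hr, hm, derivative_mul, derivative_pow, hm']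
    push_cast
    ring

lemma eval_iterate_derivative_zero (l k : ℕ) (hk : k < l) (x : ℝ) (hx : x ^ 2 - 1 = 0) :
    (derivative^[k] ((X ^ 2 - 1) ^ l : ℝ[X])).eval x = 0 := by
  obtain ⟨r, hr⟩ := iterate_derivative_factor l k hk.le
  obtain ⟨m, hm⟩ : ∃ m, l - k = m + 1 := ⟨l - (k + 1), by omega⟩
  rw [hr, hm]
  simp [hx]

lemma iterate_derivative_one_sub (M k : ℕ) :
    derivative^[k] ((1 - X : ℝ[X]) ^ M)
      = C ((-1 : ℝ) ^ k * (M.descFactorial k : ℝ)) * (1 - X) ^ (M - k) := by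
  induction k with
  | zero => simp
  | succ k ih =>
    rw [Function.iterate_succ_apply', ih, derivative_C_mul, derivative_pow,
      show derivative (1 - X : ℝ[X]) = -1 by simp, Nat.descFactorial_succ, Nat.sub_sub]
    push_cast
    simp only [map_mul, map_pow, map_neg, map_one, map_natCast]
    ring

lemma beta_int (n : ℕ) : ∀ m : ℕ,
    (∫ x in (-1:ℝ)..1, (1 - x) ^ m * (1 + x) ^ n)
      = 2 ^ (m + n + 1) * (m.factorial : ℝ) * n.factorial / (m + n + 1).factorial := by
  induction n with
  | zero =>
    intro m
    have h := intervalIntegral.integral_comp_sub_left (a := (-1:ℝ)) (b := 1)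
        (fun x => x ^ m) 1
    norm_num [integral_pow] at h
    simp only [pow_zero, mul_one, h]
    rw [Nat.factorial_succ]
    push_cast
    have : ((m:ℝ) + 1) ≠ 0 := by positivity
    field_simp
    ring
  | succ n ih =>
    intro m
    have hm1 : ((m:ℝ) + 1) ≠ 0 := by positivity
    -- integration by parts
    have hu : ∀ x ∈ Set.uIcc (-1:ℝ) 1, HasDerivAt (fun x : ℝ => (1 + x) ^ (n + 1))
        (((n:ℝ) + 1) * (1 + x) ^ n) x := by
      intro x _
      have h : HasDerivAt (fun x : ℝ => 1 + x) 1 x := by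
        simpa using (hasDerivAt_id x).const_add 1
      simpa using h.fun_pow (n + 1)
    have hv : ∀ x ∈ Set.uIcc (-1:ℝ) 1, HasDerivAt (fun x : ℝ => -(1 - x) ^ (m + 1) / ((m:ℝ) + 1))
        ((1 - x) ^ m) x := by
      intro x _
      have h : HasDerivAt (fun x : ℝ => 1 - x) (-1) x := by
        simpa using (hasDerivAt_id x).const_sub 1
      have h2 : HasDerivAt (fun x : ℝ => -(1 - x) ^ (m + 1) / ((m:ℝ) + 1))
          (-(((m + 1 : ℕ) : ℝ) * (1 - x) ^ (m + 1 - 1) * -1) / ((m:ℝ) + 1)) x :=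
        ((h.fun_pow (m + 1)).neg).div_const ((m:ℝ) + 1)
      convert h2 using 1
      rw [Nat.add_sub_cancel]; push_cast
      rw [eq_div_iff hm1]; ring
    have ibp := intervalIntegral.integral_mul_deriv_eq_deriv_mul hu hv
      (by apply Continuous.intervalIntegrable; continuity)
      (by apply Continuous.intervalIntegrable; continuity)
    have key : (∫ x in (-1:ℝ)..1, (1 - x) ^ m * (1 + x) ^ (n + 1))
        = (((n:ℝ) + 1) / ((m:ℝ) + 1)) * ∫ x in (-1:ℝ)..1, (1 - x) ^ (m + 1) * (1 + x) ^ n := by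
      have e1 : (∫ x in (-1:ℝ)..1, (1 - x) ^ m * (1 + x) ^ (n + 1))
          = ∫ x in (-1:ℝ)..1, (1 + x) ^ (n + 1) * (1 - x) ^ m := by
        apply intervalIntegral.integral_congr
        intro x _
        ring
      rw [e1, ibp]
      simp only [sub_self, neg_zero, zero_pow (Nat.succ_ne_zero m), zero_div, mul_zero, zero_mul]
      norm_num
      rw [← intervalIntegral.integral_const_mul, ← intervalIntegral.integral_neg]
      apply intervalIntegral.integral_congr
      intro x _
      field_simp
    rw [key, ih (m + 1)]
    have h2 : (m + 1) + n + 1 = m + (n + 1) + 1 := by ring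
    rw [h2]
    have hfac : ((m + (n + 1) + 1).factorial : ℝ) ≠ 0 := by positivity
    rw [Nat.factorial_succ m, Nat.factorial_succ n]
    push_cast
    field_simp

/-- The Legendre polynomial of degree `l`, via Rodrigues' formula
`P_l(x) = (1/(2^l·l!)) · dˡ/dxˡ (x²−1)ˡ`. -/
noncomputable def legendreP (l : ℕ) (x : ℝ) : ℝ :=
  (1 / (2 ^ l * l.factorial)) * iteratedDeriv l (fun y : ℝ => (y ^ 2 - 1) ^ l) x

/-- Legendre coefficients of `((1−x)/2)^M`:
`∫_{−1}^{1} ((1−x)/2)^M P_l(x) dx = 2(−1)^l (M!)²/((M−l)!(M+l+1)!)` for `l ≤ M`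
and `0` for `l > M`. -/
theorem legendre_coefficient_integral (M l : ℕ) :
    (l ≤ M →
      (∫ x in (-1:ℝ)..1, ((1 - x) / 2) ^ M * legendreP l x)
        = 2 * (-1 : ℝ) ^ l * (M.factorial : ℝ) ^ 2 /
            ((M - l).factorial * (M + l + 1).factorial)) ∧
    (M < l →
      (∫ x in (-1:ℝ)..1, ((1 - x) / 2) ^ M * legendreP l x) = 0) := by
  set P : ℝ[X] := (X ^ 2 - 1) ^ l with hP
  set Q : ℝ[X] := C ((2:ℝ)⁻¹ ^ M) * (1 - X) ^ M with hQ
  set c : ℝ := 1 / (2 ^ l * l.factorial) with hc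
  -- the integrand as polynomial evals
  have hfun : (fun y : ℝ => (y ^ 2 - 1) ^ l) = fun y => P.eval y := by
    funext y; simp [hP]
  have hleg : ∀ x : ℝ, legendreP l x = c * (derivative^[l] P).eval x := by
    intro x
    rw [legendreP, hfun, iteratedDeriv_polyeval]
  have hQeval : ∀ x : ℝ, ((1 - x) / 2) ^ M = Q.eval x := by
    intro x
    simp [hQ, div_pow, mul_pow, inv_pow]
    ring
  set J : ℕ → ℝ := fun k =>
    ∫ x in (-1:ℝ)..1, (derivative^[k] Q).eval x * (derivative^[l - k] P).eval x with hJ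
  have hmain : (∫ x in (-1:ℝ)..1, ((1 - x) / 2) ^ M * legendreP l x) = c * J 0 := by
    rw [hJ]
    simp only
    rw [← intervalIntegral.integral_const_mul]
    apply intervalIntegral.integral_congr
    intro x _
    simp only [Function.iterate_zero, id_eq, Nat.sub_zero]
    rw [hleg x, ← hQeval x]
    ring
  have hstep : ∀ k, k < l → J k = - J (k + 1) := by
    intro k hk
    have h1 : l - (k + 1) + 1 = l - k := by omega
    have h2 : derivative (derivative^[l - (k+1)] P) = derivative^[l - k] P := by
      rw [← h1, Function.iterate_succ_apply']
    have hb1 : (derivative^[l - (k+1)] P).eval 1 = 0 :=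
      eval_iterate_derivative_zero l _ (by omega) 1 (by norm_num)
    have hb2 : (derivative^[l - (k+1)] P).eval (-1) = 0 :=
      eval_iterate_derivative_zero l _ (by omega) (-1) (by norm_num)
    have := poly_ibp (derivative^[l - (k+1)] P) (derivative^[k] Q) (-1) 1
    rw [h2, hb1, hb2] at this
    simp only [mul_zero, sub_zero, zero_sub] at this
    rw [hJ]
    simp only
    rw [this, ← Function.iterate_succ_apply' derivative k Q]
  have hiter : ∀ k, k ≤ l → J 0 = (-1 : ℝ) ^ k * J k := by
    intro k hk
    induction k with
    | zero => simp
    | succ k ih =>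
      rw [ih (by omega), hstep k (by omega)]
      ring
  have hJ0 : J 0 = (-1 : ℝ) ^ l * J l := hiter l le_rfl
  -- compute derivative^[l] Q
  have hDQ : derivative^[l] Q
      = C ((2:ℝ)⁻¹ ^ M * ((-1 : ℝ) ^ l * (M.descFactorial l : ℝ))) * (1 - X) ^ (M - l) := by
    rw [hQ, iterate_derivative_C_mul, iterate_derivative_one_sub, ← mul_assoc, ← C_mul]
  constructor
  · intro h
    -- J l computation
    have hJl : J l = ((2:ℝ)⁻¹ ^ M * (M.descFactorial l : ℝ)) *
        ∫ x in (-1:ℝ)..1, (1 - x) ^ M * (1 + x) ^ l := by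
      rw [hJ]
      simp only [Nat.sub_self, Function.iterate_zero, id_eq]
      rw [← intervalIntegral.integral_const_mul]
      apply intervalIntegral.integral_congr
      intro x _
      rw [hDQ]
      simp only [eval_mul, eval_C, eval_pow, eval_sub, eval_one, eval_X, hP]
      have hx2 : ((x ^ 2 - 1 : ℝ)) ^ l = (-1 : ℝ) ^ l * ((1 - x) ^ l * (1 + x) ^ l) := by
        rw [show (x ^ 2 - 1 : ℝ) = -1 * ((1 - x) * (1 + x)) by ring, mul_pow, mul_pow]
      rw [hx2]
      have hpow : (1 - x) ^ (M - l) * (1 - x) ^ l = (1 - x) ^ M := by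
        rw [← pow_add, Nat.sub_add_cancel h]
      have hneg : (-1 : ℝ) ^ l * (-1 : ℝ) ^ l = 1 := by
        rw [← pow_add, ← two_mul, pow_mul]; norm_num
      calc (2:ℝ)⁻¹ ^ M * ((-1:ℝ) ^ l * (M.descFactorial l : ℝ)) * (1 - x) ^ (M - l) *
              ((-1:ℝ) ^ l * ((1 - x) ^ l * (1 + x) ^ l))
          = ((-1:ℝ) ^ l * (-1:ℝ) ^ l) * ((2:ℝ)⁻¹ ^ M * (M.descFactorial l : ℝ) *
              (((1 - x) ^ (M - l) * (1 - x) ^ l) * (1 + x) ^ l)) := by ring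
        _ = (2:ℝ)⁻¹ ^ M * (M.descFactorial l : ℝ) * ((1 - x) ^ M * (1 + x) ^ l) := by
              rw [hpow, hneg]; ring
    rw [hmain, hJ0, hJl, beta_int l M]
    have hdesc : ((M - l).factorial * M.descFactorial l : ℝ) = M.factorial := by
      rw [← Nat.cast_mul, Nat.factorial_mul_descFactorial h]
    have n1 : ((M - l).factorial : ℝ) ≠ 0 := by positivity
    have n2 : ((M + l + 1).factorial : ℝ) ≠ 0 := by positivity
    have n3 : (l.factorial : ℝ) ≠ 0 := by positivity
    have hdesc' : (M.descFactorial l : ℝ) = (M.factorial : ℝ) / (M - l).factorial := by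
      field_simp [← hdesc]
      linarith
    rw [hc, hdesc']
    field_simp
    rw [pow_succ, pow_add, ← mul_assoc, ← mul_assoc, ← mul_pow]; norm_num
  · intro h
    have hdz : (M.descFactorial l : ℕ) = 0 := Nat.descFactorial_eq_zero_iff_lt.mpr h
    have hJl0 : J l = 0 := by
      rw [hJ]
      simp only [Nat.sub_self, Function.iterate_zero, id_eq]
      have : derivative^[l] Q = 0 := by
        rw [hDQ, hdz]
        simp
      rw [this]
      simp
    rw [hmain, hJ0, hJl0]
    ring
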